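/- Let (x_n) be a sequence satisfying x_{n+3} x_n = x_{n+2} x_{n+1} + a(x_{n+1} + x_{n+2}) for all n with all terms nonzero, and suppose the 3×3 Wronskian determinants δ_n (with column spacing 2) are all nonzero. Then there exist constants K1 and K2 (independent of n) such that x_{n+6} - K1 x_{n+4} + K2 x_{n+2} - x_n = 0 for all n. -/

import Mathlib

theorem heiho_linearizable_k1 {F : Type*} [Field F] (a : F)
    (x : ℤ → F) (hnz : ∀ n, x n ≠ 0)
    (hrec : ∀ n : ℤ, x (n + 3) * x n = x (n + 2) * x (n + 1) + a * (x (n + 1) + x (n + 2)))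
    (hδ : ∀ n : ℤ,
      Matrix.det !![x n,       x (n + 2), x (n + 4);
                    x (n + 1), x (n + 3), x (n + 5);
                    x (n + 2), x (n + 4), x (n + 6)] ≠ 0) :
    ∃ K1 K2 : F, ∀ n : ℤ, x (n + 6) - K1 * x (n + 4) + K2 * x (n + 2) - x n = 0 := by
  -- normalized recurrence instances
  have h : ∀ n : ℤ, x (n + 3) * x n = x (n + 2) * x (n + 1) + a * (x (n + 1) + x (n + 2)) := hrec
  have h' : ∀ n : ℤ, x (n + 4) * x (n + 1) = x (n + 3) * x (n + 2) + a * (x (n + 2) + x (n + 3)) := by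
    intro n
    have := hrec (n + 1)
    rw [show n+1+3 = n+4 by ring, show n+1+2 = n+3 by ring, show n+1+1 = n+2 by ring] at this
    exact this
  have h'' : ∀ n : ℤ, x (n + 5) * x (n + 2) = x (n + 4) * x (n + 3) + a * (x (n + 3) + x (n + 4)) := by
    intro n
    have := hrec (n + 2)
    rw [show n+2+3 = n+5 by ring, show n+2+2 = n+4 by ring, show n+2+1 = n+3 by ring] at this
    exact this
  have h''' : ∀ n : ℤ, x (n + 6) * x (n + 3) = x (n + 5) * x (n + 4) + a * (x (n + 4) + x (n + 5)) := by
    intro n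
    have := hrec (n + 3)
    rw [show n+3+3 = n+6 by ring, show n+3+2 = n+5 by ring, show n+3+1 = n+4 by ring] at this
    exact this
  set J : ℤ → F := fun n => ((x n + x (n+2) + a) * (x (n+1) + x (n+3) + a)) / (x (n+1) * x (n+2)) with hJ
  have hJstep : ∀ n : ℤ, J (n + 1) = J n := by
    intro n
    simp only [hJ]
    rw [show n+1+2 = n+3 by ring, show n+1+1 = n+2 by ring, show n+1+3 = n+4 by ring]
    rw [div_eq_div_iff (by exact mul_ne_zero (hnz _) (hnz _)) (by exact mul_ne_zero (hnz _) (hnz _))]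
    linear_combination (x (n+1) + x (n+3) + a) * x (n+2) * (h' n - h n)
  have hJconst : ∀ n : ℤ, J n = J 0 := by
    intro n
    induction n using Int.induction_on with
    | zero => rfl
    | succ k ih => rw [show ((k:ℤ)+1) = (k:ℤ) + 1 by ring, hJstep k, ih]
    | pred k ih =>
      have := hJstep (-(k:ℤ) - 1)
      rw [show (-(k:ℤ) - 1 + 1) = -(k:ℤ) by ring] at this
      rw [← this, ih]
  refine ⟨J 0 - 1, J 0 - 1, fun n => ?_⟩
  -- cleared identity
  have G : (x (n+6) - x n) * (x (n+3) * x (n+4)) =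
      ((x (n+2) + x (n+4) + a) * (x (n+3) + x (n+5) + a) - x (n+3) * x (n+4)) * (x (n+4) - x (n+2)) := by
    linear_combination x (n+4) * (h''' n - h'' n + h' n - h n) + (x (n+2) + x (n+4) + a) * (h'' n - h' n)
  have hJn : J 0 = ((x (n+2) + x (n+4) + a) * (x (n+3) + x (n+5) + a)) / (x (n+3) * x (n+4)) := by
    rw [← hJconst (n+2)]
    simp only [hJ]
    rw [show n+2+2 = n+4 by ring, show n+2+1 = n+3 by ring, show n+2+3 = n+5 by ring]
  rw [hJn]
  have hne : x (n+3) * x (n+4) ≠ 0 := mul_ne_zero (hnz _) (hnz _)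
  have h3 : x (n+3) ≠ 0 := hnz _
  have h4 : x (n+4) ≠ 0 := hnz _
  field_simp
  linear_combination G
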